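/- arXiv:2101.00287 — 2 statements merged into one kernel-verified Lean document; each statement's English description precedes it below -/
import Mathlib

section
/- Let D and L be star bodies in R^n with L arbitrary, let 0 < k < n, and let g be a non-negative continuous function on L with g(0) = ||g||_∞ = 1. Then (∫_L ||x||_D^{-k} g(x) dx / ∫_D ||x||_D^{-k} dx)^{1/(n-k)} ≤ (∫_L g(x) dx / |D|)^{1/n}. (This is the key lemma of Milman–Pajor used in the proof of the main theorem.) -/
open MeasureTheory Metric Set
open scoped Pointwise

noncomputable section

/-- Euclidean space ℝⁿ. -/
abbrev En (n : ℕ) := EuclideanSpace ℝ (Fin n)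

/-- A star body: compact, origin interior, star-shaped about the origin, with
continuous Minkowski functional (the `gauge`). -/
def IsStarBody {n : ℕ} (K : Set (En n)) : Prop :=
  IsCompact K ∧ K ∈ nhds (0 : En n) ∧
    (∀ x ∈ K, ∀ t : ℝ, t ∈ Icc (0:ℝ) 1 → t • x ∈ K) ∧ Continuous (gauge K)

open Filter
open scoped Topology ENNReal

lemma sb_lt_one_subset {n : ℕ} {K : Set (En n)} (hK : IsStarBody K) :
    {x | gauge K x < 1} ⊆ K := by
  intro x hx
  obtain ⟨b, hb0, hb1, hmem⟩ := exists_lt_of_gauge_lt (absorbent_nhds_zero hK.2.1) hx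
  obtain ⟨y, hy, rfl⟩ := hmem
  exact hK.2.2.1 y hy b ⟨hb0.le, hb1.le⟩

lemma sb_gauge_lt_smul {n : ℕ} (K : Set (En n)) {s : ℝ} (hs : 0 < s) :
    {x | gauge K x < s} = s • {x | gauge K x < 1} := by
  ext x
  rw [mem_smul_set_iff_inv_smul_mem₀ hs.ne']
  simp only [mem_setOf_eq, gauge_smul_of_nonneg (inv_nonneg.2 hs.le), smul_eq_mul]
  rw [inv_mul_lt_iff₀ hs, mul_one]

lemma sb_vol_smul {n : ℕ} (T : Set (En n)) {s : ℝ} (hs : 0 ≤ s) :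
    volume (s • T) = ENNReal.ofReal (s ^ n) * volume T := by
  rw [Measure.addHaar_smul_of_nonneg _ hs, finrank_euclideanSpace_fin]

lemma sb_vol_lt_one {n : ℕ} {K : Set (En n)} (hK : IsStarBody K) :
    volume {x | gauge K x < 1} = volume K := by
  refine le_antisymm (measure_mono (sb_lt_one_subset hK)) ?_
  have key : ∀ s : ℝ, 1 < s →
      volume K ≤ ENNReal.ofReal (s ^ n) * volume {x | gauge K x < 1} := by
    intro s hs
    rw [← sb_vol_smul _ (by positivity : (0:ℝ) ≤ s), ← sb_gauge_lt_smul K (by linarith)]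
    exact measure_mono fun x hx => lt_of_le_of_lt (gauge_le_one_of_mem hx) hs
  have htend : Tendsto (fun s : ℝ => ENNReal.ofReal (s ^ n) * volume {x | gauge K x < 1})
      (𝓝[>] (1:ℝ)) (𝓝 (volume {x | gauge K x < 1})) := by
    have h1 : Tendsto (fun s : ℝ => ENNReal.ofReal (s ^ n)) (𝓝[>] (1:ℝ)) (𝓝 1) := by
      have : Tendsto (fun s : ℝ => ENNReal.ofReal (s ^ n)) (𝓝 (1:ℝ)) (𝓝 (ENNReal.ofReal (1 ^ n))) := by
        exact (ENNReal.continuous_ofReal.comp (continuous_pow n)).continuousAt.tendsto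
      simpa using this.mono_left nhdsWithin_le_nhds
    simpa using ENNReal.Tendsto.mul_const h1 (Or.inl one_ne_zero)
  exact ge_of_tendsto htend (eventually_nhdsWithin_of_forall fun s hs => key s hs)

lemma sb_vol_lt {n : ℕ} {K : Set (En n)} (hK : IsStarBody K) {s : ℝ} (hs : 0 < s) :
    volume {x | gauge K x < s} = ENNReal.ofReal (s ^ n) * volume K := by
  rw [sb_gauge_lt_smul K hs, sb_vol_smul _ hs.le, sb_vol_lt_one hK]

lemma sb_vol_zero {n : ℕ} (hn : 0 < n) {K : Set (En n)} (hK : IsStarBody K) :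
    volume {x | gauge K x = 0} = 0 := by
  have key : ∀ s : ℝ, 0 < s →
      volume {x | gauge K x = 0} ≤ ENNReal.ofReal (s ^ n) * volume K := by
    intro s hs
    rw [← sb_vol_lt hK hs]
    exact measure_mono fun x hx => by simp only [mem_setOf_eq] at *; rw [hx]; exact hs
  have htend : Tendsto (fun s : ℝ => ENNReal.ofReal (s ^ n) * volume K)
      (𝓝[>] (0:ℝ)) (𝓝 0) := by
    have h1 : Tendsto (fun s : ℝ => ENNReal.ofReal (s ^ n)) (𝓝[>] (0:ℝ)) (𝓝 0) := by
      have : Tendsto (fun s : ℝ => ENNReal.ofReal (s ^ n)) (𝓝 (0:ℝ)) (𝓝 (ENNReal.ofReal (0 ^ n))) :=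
        (ENNReal.continuous_ofReal.comp (continuous_pow n)).continuousAt.tendsto
      have hn0 : (0:ℝ) ^ n = 0 := zero_pow hn.ne'
      simpa [hn0] using this.mono_left nhdsWithin_le_nhds
    simpa using ENNReal.Tendsto.mul_const h1 (Or.inr (hK.1.measure_lt_top.ne))
  simpa using ge_of_tendsto htend (eventually_nhdsWithin_of_forall fun s hs => key s hs)

lemma sb_superlevel {n k : ℕ} (hk : 0 < k) (K : Set (En n)) {t : ℝ} (ht : 0 < t) :
    {x : En n | t < (gauge K x ^ k)⁻¹}
      = {x | 0 < gauge K x ∧ gauge K x < t ^ (-(k:ℝ)⁻¹)} := by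
  have hst : (0:ℝ) < t ^ (-(k:ℝ)⁻¹) := Real.rpow_pos_of_pos ht _
  have hstk : (t ^ (-(k:ℝ)⁻¹)) ^ k = t⁻¹ := by
    rw [← Real.rpow_natCast (t ^ (-(k:ℝ)⁻¹)) k, ← Real.rpow_mul ht.le]
    rw [neg_mul, inv_mul_cancel₀ (by exact_mod_cast hk.ne' : (k:ℝ) ≠ 0)]
    exact Real.rpow_neg_one t
  ext x
  simp only [mem_setOf_eq]
  constructor
  · intro hx
    rcases eq_or_lt_of_le (gauge_nonneg x : (0:ℝ) ≤ gauge K x) with h0 | h0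
    · rw [← h0, zero_pow hk.ne', inv_zero] at hx; exact absurd hx (not_lt.2 ht.le)
    · refine ⟨h0, ?_⟩
      rw [← pow_lt_pow_iff_left₀ (gauge_nonneg x) hst.le hk.ne', hstk]
      rw [lt_inv_comm₀ ht (by positivity)] at hx
      exact hx
  · rintro ⟨h0, hlt⟩
    rw [lt_inv_comm₀ ht (by positivity)]
    rw [← hstk]
    exact pow_lt_pow_left₀ hlt (gauge_nonneg x) hk.ne'

lemma sb_vol_superlevel {n k : ℕ} (hn : 0 < n) (hk : 0 < k) {K : Set (En n)}
    (hK : IsStarBody K) {t : ℝ} (ht : 0 < t) :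
    volume {x : En n | t < (gauge K x ^ k)⁻¹}
      = ENNReal.ofReal ((t ^ (-(k:ℝ)⁻¹)) ^ n) * volume K := by
  have hst : (0:ℝ) < t ^ (-(k:ℝ)⁻¹) := Real.rpow_pos_of_pos ht _
  rw [sb_superlevel hk K ht, ← sb_vol_lt hK hst]
  have hset : {x : En n | 0 < gauge K x ∧ gauge K x < t ^ (-(k:ℝ)⁻¹)}
      = {x | gauge K x < t ^ (-(k:ℝ)⁻¹)} \ {x | gauge K x = 0} := by
    ext x
    simp only [mem_setOf_eq, mem_diff]
    constructor
    · rintro ⟨h1, h2⟩; exact ⟨h2, h1.ne'⟩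
    · rintro ⟨h1, h2⟩; exact ⟨lt_of_le_of_ne (gauge_nonneg x) (Ne.symm h2), h1⟩
  rw [hset, measure_diff_null (sb_vol_zero hn hK)]

lemma tail_lintegral {n k : ℕ} (hk : 0 < k) (hkn : k < n) {t₀ : ℝ} (ht₀ : 0 < t₀) :
    ∫⁻ t in Ioi t₀, ENNReal.ofReal ((t ^ (-(k:ℝ)⁻¹)) ^ n)
      = ENNReal.ofReal (t₀ ^ (-(k:ℝ)⁻¹ * n + 1) * ((k:ℝ) / ((n:ℝ) - k))) := by
  have hkR : (0:ℝ) < k := by exact_mod_cast hk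
  have hnR : (0:ℝ) < n := by exact_mod_cast hk.trans hkn
  have ha : -(k:ℝ)⁻¹ * n < -1 := by
    rw [neg_mul, neg_lt_neg_iff, lt_inv_mul_iff₀ hkR]
    simpa using (show (k:ℝ) < n by exact_mod_cast hkn)
  have hcong : ∀ t ∈ Ioi t₀, ENNReal.ofReal ((t ^ (-(k:ℝ)⁻¹)) ^ n)
      = ENNReal.ofReal (t ^ (-(k:ℝ)⁻¹ * n)) := by
    intro t ht
    have htpos : (0:ℝ) < t := ht₀.trans ht
    rw [← Real.rpow_natCast (t ^ (-(k:ℝ)⁻¹)) n, ← Real.rpow_mul htpos.le]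
  rw [setLIntegral_congr_fun measurableSet_Ioi hcong]
  rw [← ofReal_integral_eq_lintegral_ofReal (integrableOn_Ioi_rpow_of_lt ha ht₀)
      ((ae_restrict_iff' measurableSet_Ioi).2 (ae_of_all _ fun t ht =>
        Real.rpow_nonneg (ht₀.trans ht).le _))]
  rw [integral_Ioi_rpow_of_lt ha ht₀]
  congr 1
  have h1 : -(k:ℝ)⁻¹ * n + 1 ≠ 0 := by nlinarith
  field_simp
  rw [show (-(n:ℝ)+k) = -((n:ℝ)-k) by ring, div_neg, neg_neg]

lemma sb_lintegral_D {n k : ℕ} (hk : 0 < k) (hkn : k < n) {D : Set (En n)}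
    (hD : IsStarBody D) :
    ∫⁻ x in D, ENNReal.ofReal ((gauge D x ^ k)⁻¹)
      = ENNReal.ofReal ((n:ℝ) / ((n:ℝ) - k)) * volume D := by
  have hn : 0 < n := hk.trans hkn
  set h : En n → ℝ := fun x => (gauge D x ^ k)⁻¹ with hh
  have hmble : Measurable h := ((hD.2.2.2.pow k).measurable).inv
  rw [lintegral_eq_lintegral_meas_lt _ (ae_of_all _ fun x => inv_nonneg.2 (pow_nonneg (gauge_nonneg x) k)) hmble.aemeasurable]
  have hDred : ∀ t : ℝ, (volume.restrict D) {a | t < h a} = volume ({a | t < h a} ∩ D) :=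
    fun t => Measure.restrict_apply (measurableSet_lt measurable_const hmble)
  have key1 : ∀ t ∈ Ioc (0:ℝ) 1, (volume.restrict D) {a | t < h a} = volume D := by
    intro t ht
    rw [hDred]
    refine le_antisymm (measure_mono inter_subset_right) ?_
    have hst1 : (1:ℝ) ≤ t ^ (-(k:ℝ)⁻¹) :=
      Real.one_le_rpow_of_pos_of_le_one_of_nonpos ht.1 ht.2 (neg_nonpos.2 (inv_nonneg.2 (Nat.cast_nonneg k)))
    have hsub : {x | gauge D x < 1} \ {x | gauge D x = 0} ⊆ {a | t < h a} ∩ D := by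
      rintro x ⟨hx1, hx0⟩
      refine ⟨?_, sb_lt_one_subset hD hx1⟩
      rw [sb_superlevel hk D ht.1]
      exact ⟨lt_of_le_of_ne (gauge_nonneg x) (Ne.symm hx0), lt_of_lt_of_le hx1 hst1⟩
    calc volume D = volume ({x | gauge D x < 1} \ {x | gauge D x = 0}) := by
          rw [measure_diff_null (sb_vol_zero hn hD), sb_vol_lt_one hD]
      _ ≤ _ := measure_mono hsub
  have key2 : ∀ t ∈ Ioi (1:ℝ), (volume.restrict D) {a | t < h a}
      = ENNReal.ofReal ((t ^ (-(k:ℝ)⁻¹)) ^ n) * volume D := by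
    intro t ht
    have ht0 : (0:ℝ) < t := lt_trans zero_lt_one ht
    rw [hDred, ← sb_vol_superlevel hn hk hD ht0]
    congr 1
    refine inter_eq_left.2 ?_
    intro x hx
    rw [sb_superlevel hk D ht0] at hx
    apply sb_lt_one_subset hD
    have hst1 : t ^ (-(k:ℝ)⁻¹) ≤ 1 :=
      Real.rpow_le_one_of_one_le_of_nonpos ht.le (neg_nonpos.2 (inv_nonneg.2 (Nat.cast_nonneg k)))
    exact lt_of_lt_of_le hx.2 hst1
  rw [← Ioc_union_Ioi_eq_Ioi (zero_le_one (α := ℝ)),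
    lintegral_union measurableSet_Ioi (Ioc_disjoint_Ioi le_rfl)]
  rw [setLIntegral_congr_fun measurableSet_Ioc key1,
    setLIntegral_congr_fun measurableSet_Ioi key2]
  rw [setLIntegral_const, Real.volume_Ioc]
  simp only [sub_zero, ENNReal.ofReal_one, mul_one]
  have : ∀ t, ENNReal.ofReal ((t ^ (-(k:ℝ)⁻¹)) ^ n) * volume D
      = volume D * ENNReal.ofReal ((t ^ (-(k:ℝ)⁻¹)) ^ n) := fun t => mul_comm _ _
  simp_rw [this]
  rw [lintegral_const_mul' _ _ (hD.1.measure_lt_top.ne), tail_lintegral hk hkn zero_lt_one]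
  have hnk : (0:ℝ) < (n:ℝ) - k := by
    have : (k:ℝ) < n := by exact_mod_cast hkn
    linarith
  rw [Real.one_rpow, one_mul]
  have heq : ENNReal.ofReal ((n:ℝ)/((n:ℝ)-k)) = 1 + ENNReal.ofReal ((k:ℝ)/((n:ℝ)-k)) := by
    rw [← ENNReal.ofReal_one, ← ENNReal.ofReal_add zero_le_one (by positivity)]
    congr 1
    field_simp
    ring
  rw [heq, add_mul, one_mul, mul_comm (ENNReal.ofReal _) (volume D)]

lemma sb_lintegral_L_le {n k : ℕ} (hk : 0 < k) (hkn : k < n) {D L : Set (En n)}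
    (hD : IsStarBody D) (hLm : MeasurableSet L) {g : En n → ℝ}
    (hgm : AEMeasurable g (volume.restrict L))
    (hg0 : ∀ x ∈ L, 0 ≤ g x) (hg1 : ∀ x ∈ L, g x ≤ 1)
    {t₀ : ℝ} (ht₀ : 0 < t₀) :
    ∫⁻ x in L, ENNReal.ofReal ((gauge D x ^ k)⁻¹ * g x)
      ≤ (∫⁻ x in L, ENNReal.ofReal (g x)) * ENNReal.ofReal t₀
        + volume D * ENNReal.ofReal (t₀ ^ (-(k:ℝ)⁻¹ * (n:ℝ) + 1) * ((k:ℝ) / ((n:ℝ) - k))) := by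
  have hn : 0 < n := hk.trans hkn
  set h : En n → ℝ := fun x => (gauge D x ^ k)⁻¹ with hh
  have hmble : Measurable h := ((hD.2.2.2.pow k).measurable).inv
  have hGm : AEMeasurable (fun x => ENNReal.ofReal (g x)) (volume.restrict L) :=
    hgm.ennreal_ofReal
  set μg : Measure (En n) := (volume.restrict L).withDensity (fun x => ENNReal.ofReal (g x))
    with hμg
  have step0 : ∫⁻ x in L, ENNReal.ofReal (h x * g x)
      = ∫⁻ x, ENNReal.ofReal (h x) ∂μg := by
    rw [hμg, lintegral_withDensity_eq_lintegral_mul₀ hGm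
      (hmble.ennreal_ofReal.aemeasurable)]
    refine lintegral_congr_ae ?_
    filter_upwards [(ae_restrict_iff' hLm).2 (ae_of_all _ hg0)] with x hx
    simp only [Pi.mul_apply]
    rw [ENNReal.ofReal_mul (inv_nonneg.2 (pow_nonneg (gauge_nonneg x) k)), mul_comm]
  rw [step0]
  rw [lintegral_eq_lintegral_meas_lt _
    (ae_of_all _ fun x => inv_nonneg.2 (pow_nonneg (gauge_nonneg x) k)) hmble.aemeasurable]
  have hSmeas : ∀ t : ℝ, MeasurableSet {a : En n | t < h a} :=
    fun t => measurableSet_lt measurable_const hmble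
  rw [← Ioc_union_Ioi_eq_Ioi ht₀.le,
    lintegral_union measurableSet_Ioi (Ioc_disjoint_Ioi le_rfl)]
  gcongr
  · -- first piece
    calc ∫⁻ t in Ioc 0 t₀, μg {a | t < h a}
        ≤ ∫⁻ _ in Ioc 0 t₀, (∫⁻ x in L, ENNReal.ofReal (g x)) := by
          refine setLIntegral_mono measurable_const fun t _ => ?_
          have : μg {a | t < h a} ≤ μg univ := measure_mono (subset_univ _)
          rwa [hμg, withDensity_apply _ MeasurableSet.univ, Measure.restrict_univ] at this
      _ = (∫⁻ x in L, ENNReal.ofReal (g x)) * ENNReal.ofReal t₀ := by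
          rw [setLIntegral_const, Real.volume_Ioc, sub_zero]
  · -- second piece
    calc ∫⁻ t in Ioi t₀, μg {a | t < h a}
        ≤ ∫⁻ t in Ioi t₀, volume D * ENNReal.ofReal ((t ^ (-(k:ℝ)⁻¹)) ^ n) := by
          refine lintegral_mono_ae ((ae_restrict_iff' measurableSet_Ioi).2
            (ae_of_all _ fun t ht => ?_))
          have ht0 : (0:ℝ) < t := ht₀.trans ht
          have h1 : μg {a | t < h a} = ∫⁻ x in {a | t < h a} ∩ L, ENNReal.ofReal (g x) := by
            rw [hμg, withDensity_apply _ (hSmeas t), Measure.restrict_restrict (hSmeas t)]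
          rw [h1, mul_comm, ← sb_vol_superlevel hn hk hD ht0]
          refine setLIntegral_le_meas ((hSmeas t).inter hLm) (fun a ha _ => ?_)
            (fun a ha ha' => absurd ha.1 ha')
          calc ENNReal.ofReal (g a) ≤ ENNReal.ofReal 1 :=
                ENNReal.ofReal_le_ofReal (hg1 a ha.2)
            _ = 1 := ENNReal.ofReal_one
      _ = volume D * ENNReal.ofReal (t₀ ^ (-(k:ℝ)⁻¹ * (n:ℝ) + 1) * ((k:ℝ) / ((n:ℝ) - k))) := by
          rw [lintegral_const_mul' _ _ (hD.1.measure_lt_top.ne), tail_lintegral hk hkn ht₀]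

/-- The Milman–Pajor lemma: if D, L are star bodies, 0 < k < n, and g is a
non-negative continuous function on L with g(0) = ‖g‖_∞ = 1, then
(∫_L ‖x‖_D^{-k} g / ∫_D ‖x‖_D^{-k})^{1/(n-k)} ≤ (∫_L g / |D|)^{1/n}. -/
theorem milman_pajor (n k : ℕ) (hk : 0 < k) (hkn : k < n)
    (D L : Set (En n)) (hD : IsStarBody D) (hL : IsStarBody L)
    (g : En n → ℝ) (hgc : ContinuousOn g L) (hg0 : ∀ x ∈ L, 0 ≤ g x)
    (hgsup : ∀ x ∈ L, g x ≤ 1) (hgzero : g 0 = 1) :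
    ((∫ x in L, (gauge D x) ^ (-(k:ℝ)) * g x) / ∫ x in D, (gauge D x) ^ (-(k:ℝ)))
        ^ ((1:ℝ) / ((n:ℝ) - k))
      ≤ ((∫ x in L, g x) / (volume D).toReal) ^ ((1:ℝ) / (n:ℝ)) := by
  have hn : 0 < n := hk.trans hkn
  have hkR : (0:ℝ) < k := by exact_mod_cast hk
  have hnR : (0:ℝ) < n := by exact_mod_cast hn
  have hnkR : (0:ℝ) < (n:ℝ) - k := by
    have : (k:ℝ) < n := by exact_mod_cast hkn
    linarith
  have hLm : MeasurableSet L := hL.1.isClosed.measurableSet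
  have hDm : MeasurableSet D := hD.1.isClosed.measurableSet
  have hmble : Measurable (fun x : En n => (gauge D x ^ k)⁻¹) :=
    ((hD.2.2.2.pow k).measurable).inv
  have hrw : ∀ x : En n, (gauge D x) ^ (-(k:ℝ)) = (gauge D x ^ k)⁻¹ := fun x => by
    rw [Real.rpow_neg (gauge_nonneg x), Real.rpow_natCast]
  simp_rw [hrw]
  -- volume facts
  have hVpos : 0 < volume D := by
    have h0 : (0 : En n) ∈ interior D := mem_interior_iff_mem_nhds.2 hD.2.1
    calc (0:ℝ≥0∞) < volume (interior D) :=
          isOpen_interior.measure_pos volume ⟨0, h0⟩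
      _ ≤ volume D := measure_mono interior_subset
  have hVfin : volume D ≠ ∞ := hD.1.measure_lt_top.ne
  set V : ℝ := (volume D).toReal with hV
  have hVposR : 0 < V := ENNReal.toReal_pos hVpos.ne' hVfin
  -- integral over D
  have hgmL : AEMeasurable g (volume.restrict L) := (hgc.aemeasurable hLm)
  have hB : ∫ x in D, (gauge D x ^ k)⁻¹ = ((n:ℝ)/((n:ℝ)-k)) * V := by
    rw [integral_eq_lintegral_of_nonneg_ae
      (ae_of_all _ fun x => inv_nonneg.2 (pow_nonneg (gauge_nonneg x) k))
      hmble.aestronglyMeasurable]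
    rw [sb_lintegral_D hk hkn hD, ENNReal.toReal_mul, ENNReal.toReal_ofReal (by positivity)]
  set IC : ℝ≥0∞ := ∫⁻ x in L, ENNReal.ofReal (g x) with hIC
  have hICfin : IC ≠ ∞ := by
    have : IC ≤ volume L := by
      refine setLIntegral_le_meas hLm (fun a ha _ => ?_) (fun a ha ha' => absurd ha ha')
      calc ENNReal.ofReal (g a) ≤ ENNReal.ofReal 1 := ENNReal.ofReal_le_ofReal (hgsup a ha)
        _ = 1 := ENNReal.ofReal_one
    exact (lt_of_le_of_lt this hL.1.measure_lt_top).ne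
  set C : ℝ := IC.toReal with hC
  have hCnn : 0 ≤ C := ENNReal.toReal_nonneg
  have hCeq : ∫ x in L, g x = C := by
    rw [integral_eq_lintegral_of_nonneg_ae
      ((ae_restrict_iff' hLm).2 (ae_of_all _ hg0)) (hgc.aestronglyMeasurable hLm)]
  set IA : ℝ≥0∞ := ∫⁻ x in L, ENNReal.ofReal ((gauge D x ^ k)⁻¹ * g x) with hIA
  have hAeq : ∫ x in L, (gauge D x ^ k)⁻¹ * g x = IA.toReal := by
    rw [integral_eq_lintegral_of_nonneg_ae
      ((ae_restrict_iff' hLm).2 (ae_of_all _ fun x hx =>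
        mul_nonneg (inv_nonneg.2 (pow_nonneg (gauge_nonneg x) k)) (hg0 x hx)))
      (hmble.aestronglyMeasurable.mul (hgc.aestronglyMeasurable hLm))]
  rw [hAeq, hCeq, hB]
  have hBpos : 0 < ((n:ℝ)/((n:ℝ)-k)) * V := by positivity
  by_cases hC0 : IC = 0
  · -- degenerate case
    have hg00 : (fun x => ENNReal.ofReal (g x)) =ᵐ[volume.restrict L] 0 :=
      (lintegral_eq_zero_iff' hgmL.ennreal_ofReal).1 hC0
    have hIA0 : IA = 0 := by
      rw [hIA, ← lintegral_zero (μ := volume.restrict L)]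
      refine lintegral_congr_ae ?_
      filter_upwards [hg00] with x hx
      have : g x ≤ 0 := by
        by_contra hgx
        push_neg at hgx
        simp only [Pi.zero_apply] at hx
        exact absurd hx (by simp [ENNReal.ofReal_eq_zero, not_le, hgx])
      have : (gauge D x ^ k)⁻¹ * g x ≤ 0 :=
        mul_nonpos_of_nonneg_of_nonpos (inv_nonneg.2 (pow_nonneg (gauge_nonneg x) k)) this
      simp [ENNReal.ofReal_eq_zero.2 this]
    have hCzero : C = 0 := by rw [hC, hC0]; simp
    rw [hIA0, hCzero]
    simp only [ENNReal.toReal_zero, zero_div]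
    rw [Real.zero_rpow (by positivity : (1:ℝ)/((n:ℝ)-k) ≠ 0),
      Real.zero_rpow (by positivity : (1:ℝ)/(n:ℝ) ≠ 0)]
  · -- main case
    have hCpos : 0 < C := ENNReal.toReal_pos hC0 hICfin
    set r : ℝ := C / V with hr
    have hrpos : 0 < r := div_pos hCpos hVposR
    set t₀ : ℝ := r ^ (-(k:ℝ)/(n:ℝ)) with ht₀def
    have ht₀ : 0 < t₀ := Real.rpow_pos_of_pos hrpos _
    have hbound := sb_lintegral_L_le hk hkn hD hLm hgmL hg0 hgsup ht₀
    -- simplify the bound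
    have hexp : t₀ ^ (-(k:ℝ)⁻¹ * (n:ℝ) + 1) = r * t₀ := by
      rw [ht₀def, ← Real.rpow_mul hrpos.le,
        show r * r ^ (-(k:ℝ)/(n:ℝ)) = r ^ (1 + -(k:ℝ)/(n:ℝ)) from by
          rw [Real.rpow_add hrpos, Real.rpow_one]]
      congr 1
      field_simp
      ring
    have hIAle : IA ≤ ENNReal.ofReal (C * t₀ * ((n:ℝ)/((n:ℝ)-k))) := by
      refine le_trans hbound ?_
      rw [hexp, ← hIC]
      have h1 : IC = ENNReal.ofReal C := by rw [hC, ENNReal.ofReal_toReal hICfin]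
      have h2 : volume D = ENNReal.ofReal V := by rw [hV, ENNReal.ofReal_toReal hVfin]
      rw [h1, h2, ← ENNReal.ofReal_mul hCnn, ← ENNReal.ofReal_mul hVposR.le,
        ← ENNReal.ofReal_add (by positivity) (by positivity)]
      refine ENNReal.ofReal_le_ofReal (le_of_eq ?_)
      rw [hr]
      field_simp
      ring
    have hA_le : IA.toReal ≤ C * t₀ * ((n:ℝ)/((n:ℝ)-k)) :=
      ENNReal.toReal_le_of_le_ofReal (by positivity) hIAle
    -- final real computation
    have hfrac : IA.toReal / (((n:ℝ)/((n:ℝ)-k)) * V) ≤ r ^ (((n:ℝ)-k)/(n:ℝ)) := by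
      rw [div_le_iff₀ hBpos]
      calc IA.toReal ≤ C * t₀ * ((n:ℝ)/((n:ℝ)-k)) := hA_le
        _ = r ^ (((n:ℝ)-k)/(n:ℝ)) * (((n:ℝ)/((n:ℝ)-k)) * V) := by
            have : r ^ (((n:ℝ)-k)/(n:ℝ)) = r * t₀ := by
              rw [ht₀def,
                show r * r ^ (-(k:ℝ)/(n:ℝ)) = r ^ (1 + -(k:ℝ)/(n:ℝ)) from by
                  rw [Real.rpow_add hrpos, Real.rpow_one]]
              congr 1
              field_simp
              ring
            rw [this, hr]
            field_simp
    calc (IA.toReal / (((n:ℝ)/((n:ℝ)-k)) * V)) ^ ((1:ℝ)/((n:ℝ)-k))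
        ≤ (r ^ (((n:ℝ)-k)/(n:ℝ))) ^ ((1:ℝ)/((n:ℝ)-k)) := by
          refine Real.rpow_le_rpow (div_nonneg ENNReal.toReal_nonneg hBpos.le) hfrac
            (by positivity)
      _ = r ^ ((1:ℝ)/(n:ℝ)) := by
          rw [← Real.rpow_mul hrpos.le]
          congr 1
          field_simp
      _ = (C / V) ^ ((1:ℝ)/(n:ℝ)) := by rw [hr]
end
end

section
/- For every 1 ≤ k ≤ n-1, the constant γ_{n,k} = ω_n^{(n-k)/n} / ω_{n-k} satisfies e^{-k/2} < γ_{n,k} < 1, where ω_m is the volume of the m-dimensional unit Euclidean ball. -/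
open MeasureTheory Metric

noncomputable section

/-- Volume of the unit Euclidean ball in ℝ^m. -/
def omeg (m : ℕ) : ℝ := (volume (closedBall (0 : En m) 1)).toReal

/-- The constant γ_{n,k} = ω_n^{(n-k)/n} / ω_{n-k}. -/
def gammaNK (n k : ℕ) : ℝ := omeg n ^ (((n:ℝ) - k)/(n:ℝ)) / omeg (n - k)

namespace GammaNKAux

open Real Set

/-- Shifted log-Gamma function. -/
def g (x : ℝ) : ℝ := Real.log (Real.Gamma (x + 1))

lemma g_convex : ConvexOn ℝ (Set.Ioi (-1 : ℝ)) g := by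
  refine ⟨convex_Ioi _, fun x hx y hy a b ha hb hab => ?_⟩
  have hx' : x + 1 ∈ Set.Ioi (0 : ℝ) := by simp only [Set.mem_Ioi] at hx ⊢; linarith
  have hy' : y + 1 ∈ Set.Ioi (0 : ℝ) := by simp only [Set.mem_Ioi] at hy ⊢; linarith
  have h := Real.convexOn_log_Gamma.2 hx' hy' ha hb hab
  have harg : a • (x + 1) + b • (y + 1) = (a • x + b • y) + 1 := by
    simp only [smul_eq_mul]; linear_combination hab
  simp only [Function.comp_apply, harg] at h
  exact h

lemma g_add_one {x : ℝ} (hx : 0 ≤ x) : g (x + 1) = g x + Real.log (x + 1) := by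
  have h1 : x + 1 ≠ 0 := by linarith
  have h2 : Real.Gamma (x + 1) ≠ 0 := (Real.Gamma_pos_of_pos (by linarith)).ne'
  rw [g, g, Real.Gamma_add_one h1, Real.log_mul h1 h2, add_comm]

lemma g_zero : g 0 = 0 := by simp [g]

lemma g_one : g 1 = 0 := by
  have : (1 : ℝ) + 1 = 2 := by norm_num
  rw [g, this]
  simp

lemma Gamma_three_half : Real.Gamma (1/2 + 1) = Real.sqrt π / 2 := by
  rw [Real.Gamma_add_one (by norm_num), Real.Gamma_one_half_eq]; ring

lemma g_half : g (1/2) = Real.log (Real.sqrt π / 2) := by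
  rw [g, Gamma_three_half]

/-- Secant slopes of a convex function are monotone in both endpoints. -/
lemma slope_le {a b c d : ℝ} (ha : -1 < a) (hc : -1 < c) (hd : -1 < d)
    (hab : a < b) (hcd : c < d) (hac : a ≤ c) (hbd : b ≤ d) :
    (g b - g a) / (b - a) ≤ (g d - g c) / (d - c) := by
  have hb : -1 < b := lt_of_lt_of_le (ha.trans hab) (le_refl b) |>.trans_le (le_refl b)
  have hb' : (-1 : ℝ) < b := ha.trans hab
  have had : a < d := hab.trans_le hbd
  have h1 : (g b - g a) / (b - a) ≤ (g d - g a) / (d - a) :=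
    g_convex.secant_mono (Set.mem_Ioi.mpr ha) (Set.mem_Ioi.mpr hb') (Set.mem_Ioi.mpr hd)
      hab.ne' had.ne' hbd
  have h2 : (g a - g d) / (a - d) ≤ (g c - g d) / (c - d) :=
    g_convex.secant_mono (Set.mem_Ioi.mpr hd) (Set.mem_Ioi.mpr ha) (Set.mem_Ioi.mpr hc)
      had.ne hcd.ne hac
  have e1 : (g a - g d) / (a - d) = (g d - g a) / (d - a) := by
    rw [← neg_div_neg_eq, neg_sub, neg_sub]
  have e2 : (g c - g d) / (c - d) = (g d - g c) / (d - c) := by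
    rw [← neg_div_neg_eq, neg_sub, neg_sub]
  rw [e1, e2] at h2
  linarith

/-- Induction step for the Stirling-type lower bound. -/
lemma step {x : ℝ} (hx : 1 ≤ x) (h : x * Real.log x - x + 1 ≤ g x) :
    (x + 1) * Real.log (x + 1) - (x + 1) + 1 ≤ g (x + 1) := by
  have hx0 : (0 : ℝ) < x := by linarith
  have h1 : Real.log (x + 1) = Real.log x + Real.log ((x + 1) / x) := by
    rw [← Real.log_mul (ne_of_gt hx0) (by positivity)]
    congr 1
    field_simp
  have h2 : Real.log ((x + 1) / x) ≤ 1 / x := by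
    have := Real.log_le_sub_one_of_pos (show (0:ℝ) < (x+1)/x by positivity)
    have e : (x + 1) / x - 1 = 1 / x := by field_simp; ring
    linarith [e ▸ this]
  have h3 : x * Real.log ((x + 1) / x) ≤ 1 := by
    calc x * Real.log ((x + 1) / x) ≤ x * (1 / x) := by
          exact mul_le_mul_of_nonneg_left h2 hx0.le
      _ = 1 := by field_simp
  have h4 : g (x + 1) = g x + Real.log (x + 1) := g_add_one (by linarith)
  rw [h4, h1]
  nlinarith [h, h3]

/-- Base case `x = 3/2` of the Stirling-type lower bound. -/
lemma base32 : (3/2 : ℝ) * Real.log (3/2) - (3/2 : ℝ) + 1 ≤ g (3/2) := by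
  have hG : Real.Gamma ((3:ℝ)/2 + 1) = 3 * Real.sqrt π / 4 := by
    rw [Real.Gamma_add_one (by norm_num), show (3:ℝ)/2 = 1/2 + 1 by norm_num, Gamma_three_half]
    ring
  have hR : g (3/2) = Real.log (3 * Real.sqrt π / 4) := by rw [g, hG]
  have hsq : Real.sqrt π ^ 2 = π := Real.sq_sqrt Real.pi_pos.le
  have l1 : Real.log ((27:ℝ)/8) = 3 * Real.log (3/2) := by
    rw [show (27:ℝ)/8 = (3/2)^3 by norm_num, Real.log_pow]; push_cast; ring
  have l2 : Real.log (9*π/16) = 2 * Real.log (3*Real.sqrt π/4) := by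
    rw [show (9:ℝ)*π/16 = (3*Real.sqrt π/4)^2 by linear_combination (-9/16:ℝ) * hsq,
      Real.log_pow]
    push_cast; ring
  have hpos : (0:ℝ) < 9*π/16 := by positivity
  have l3 : Real.log ((27:ℝ)/8) ≤ 1 + Real.log (9*π/16) := by
    rw [show (1:ℝ) = Real.log (Real.exp 1) from (Real.log_exp 1).symm,
      ← Real.log_mul (Real.exp_ne_zero 1) hpos.ne']
    apply Real.log_le_log (by norm_num)
    nlinarith [Real.exp_one_gt_d9, Real.pi_gt_three]
  rw [hR]
  linarith

/-- Stirling-type lower bound at half-integers. -/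
lemma g_ge (m : ℕ) (hm : 2 ≤ m) :
    ((m:ℝ)/2) * Real.log ((m:ℝ)/2) - (m:ℝ)/2 + 1 ≤ g ((m:ℝ)/2) := by
  induction m using Nat.strong_induction_on with
  | _ m ih =>
    rcases Nat.lt_or_ge m 4 with h4 | h4
    · interval_cases m
      · norm_num [g_one]
      · exact_mod_cast base32
    · obtain ⟨j, rfl⟩ : ∃ j, m = j + 2 := ⟨m - 2, by omega⟩
      have hj : 2 ≤ j := by omega
      have hrec := ih j (by omega) hj
      have hx : (1:ℝ) ≤ (j:ℝ)/2 := by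
        have : (2:ℝ) ≤ (j:ℝ) := by exact_mod_cast hj
        linarith
      have e : (((j+2 : ℕ)):ℝ)/2 = (j:ℝ)/2 + 1 := by push_cast; ring
      rw [e]
      exact step hx hrec

/-- Slopes of `g` are bounded above by logs of right endpoints. -/
lemma slope_le_log {a b c : ℝ} (ha : -1 < a) (hc0 : 0 ≤ c) (hab : a < b) (hac : a ≤ c)
    (hbc : b ≤ c + 1) : (g b - g a) / (b - a) ≤ Real.log (c + 1) := by
  have h := slope_le ha (by linarith : (-1:ℝ) < c) (by linarith : (-1:ℝ) < c + 1) hab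
    (by linarith : c < c + 1) hac hbc
  rw [g_add_one hc0] at h
  calc (g b - g a)/(b-a) ≤ (g c + Real.log (c+1) - g c)/(c+1-c) := h
    _ = Real.log (c+1) := by ring

/-- Slopes of `g` are bounded below by logs of left endpoints. -/
lemma log_le_slope {a c d : ℝ} (ha0 : 0 ≤ a) (hcd : c < d) (hac : a ≤ c) (had : a + 1 ≤ d) :
    Real.log (a + 1) ≤ (g d - g c) / (d - c) := by
  have h := slope_le (show (-1:ℝ) < a by linarith) (by linarith : (-1:ℝ) < c)
    (by linarith : (-1:ℝ) < d) (by linarith : a < a + 1) hcd hac had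
  rw [g_add_one ha0] at h
  calc Real.log (a+1) = (g a + Real.log (a+1) - g a)/(a+1-a) := by ring
    _ ≤ _ := h

lemma omeg_eq (m : ℕ) (hm : 0 < m) :
    omeg m = Real.sqrt π ^ m / Real.Gamma ((m:ℝ)/2 + 1) := by
  haveI : Nonempty (Fin m) := Fin.pos_iff_nonempty.mp hm
  have h := EuclideanSpace.volume_closedBall (Fin m) (0 : En m) 1
  simp only [Fintype.card_fin] at h
  have hnn : (0:ℝ) ≤ Real.sqrt π ^ m / Real.Gamma ((m:ℝ) / 2 + 1) := by
    apply div_nonneg (pow_nonneg (Real.sqrt_nonneg _) _)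
    exact (Real.Gamma_pos_of_pos (by positivity)).le
  rw [omeg, h]
  simp [ENNReal.toReal_mul, ENNReal.toReal_ofReal hnn]

lemma gammaNK_eq_exp (n k : ℕ) (hk : 1 ≤ k) (hkn : k < n) :
    gammaNK n k = Real.exp (g (((n - k : ℕ):ℝ)/2) -
      (((n - k : ℕ):ℝ)/(n:ℝ)) * g ((n:ℝ)/2)) := by
  have hn0 : 0 < n := by omega
  have hm0 : 0 < n - k := by omega
  have hMN : ((n - k : ℕ):ℝ) = (n:ℝ) - (k:ℝ) := by
    push_cast [Nat.cast_sub hkn.le]; ring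
  have hN0 : (0:ℝ) < (n:ℝ) := by exact_mod_cast hn0
  have hM0 : (0:ℝ) < ((n - k : ℕ):ℝ) := by exact_mod_cast hm0
  have hsp : (0:ℝ) < Real.sqrt π := Real.sqrt_pos.mpr Real.pi_pos
  have hGy : 0 < Real.Gamma ((n:ℝ)/2 + 1) := Real.Gamma_pos_of_pos (by positivity)
  have hGx : 0 < Real.Gamma (((n - k : ℕ):ℝ)/2 + 1) := Real.Gamma_pos_of_pos (by positivity)
  have h1 : (Real.sqrt π ^ n : ℝ) ^ (((n - k : ℕ):ℝ)/(n:ℝ)) = Real.sqrt π ^ (n - k) := by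
    rw [← Real.rpow_natCast (Real.sqrt π) n, ← Real.rpow_mul hsp.le,
      show (n:ℝ) * (((n - k : ℕ):ℝ)/(n:ℝ)) = ((n - k : ℕ):ℝ) by field_simp,
      Real.rpow_natCast]
  simp only [gammaNK, g]
  rw [omeg_eq n hn0, omeg_eq (n - k) hm0, show ((n:ℝ) - (k:ℝ))/(n:ℝ) = ((n - k : ℕ):ℝ)/(n:ℝ) by
    rw [hMN], Real.div_rpow (by positivity) hGy.le, h1, Real.exp_sub, Real.exp_log hGx,
    mul_comm (((n - k : ℕ):ℝ)/(n:ℝ)) (Real.log (Real.Gamma ((n:ℝ)/2+1))),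
    ← Real.rpow_def_of_pos hGy]
  have hpne : (Real.sqrt π ^ (n - k) : ℝ) ≠ 0 := by positivity
  rw [div_div_div_comm, div_self hpne, one_div_div]

end GammaNKAux

set_option maxHeartbeats 1000000 in
open GammaNKAux in
/-- For 1 ≤ k ≤ n-1, the constant γ_{n,k} = ω_n^{(n-k)/n}/ω_{n-k} satisfies
e^{-k/2} < γ_{n,k} < 1. -/
theorem gammaNK_bounds (n k : ℕ) (hk : 1 ≤ k) (hkn : k ≤ n - 1) :
    Real.exp (-(k:ℝ)/2) < gammaNK n k ∧ gammaNK n k < 1 := by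
  have hkn' : k < n := by omega
  have hn2 : 2 ≤ n := by omega
  obtain ⟨m, hmdef⟩ : ∃ m, n - k = m := ⟨_, rfl⟩
  have hm1 : 1 ≤ m := by omega
  have hmn : m + k = n := by omega
  have key := gammaNK_eq_exp n k hk hkn'
  rw [hmdef] at key
  rw [key]
  set M : ℝ := (m:ℝ) with hMdef
  set N : ℝ := (n:ℝ) with hNdef
  set K : ℝ := (k:ℝ) with hKdef
  have hNMK : N = M + K := by rw [hMdef, hNdef, hKdef, ← hmn]; push_cast; ring
  have hM1 : (1:ℝ) ≤ M := by rw [hMdef]; exact_mod_cast hm1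
  have hK1 : (1:ℝ) ≤ K := by rw [hKdef]; exact_mod_cast hk
  have hN2 : (2:ℝ) ≤ N := by rw [hNdef]; exact_mod_cast hn2
  have hM0 : (0:ℝ) < M := by linarith
  have hK0 : (0:ℝ) < K := by linarith
  have hN0 : (0:ℝ) < N := by linarith
  have hK2 : (0:ℝ) < K/2 := by linarith
  have hKM : N/2 - M/2 = K/2 := by rw [hNMK]; ring
  -- upper bound on the slope from M/2 to N/2
  have hC : g (N/2) - g (M/2) ≤ Real.log (N/2 + 1/2) * (K/2) := by
    have h := slope_le_log (a := M/2) (b := N/2) (c := N/2 - 1/2)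
      (by linarith) (by linarith) (by linarith) (by linarith) (by linarith)
    rw [show N/2 - 1/2 + 1 = N/2 + 1/2 by ring, hKM] at h
    exact (div_le_iff₀ hK2).mp h
  -- the two key inequalities
  have hT1 : N * g (M/2) < M * g (N/2) := by
    rcases Nat.lt_or_ge m 2 with hm2 | hm2
    · -- m = 1
      have hm1' : m = 1 := by omega
      have hMeq : M = 1 := by rw [hMdef, hm1']; norm_num
      rw [hMeq]
      have hneg : g (1/2) < 0 := by
        rw [g_half]
        apply Real.log_neg (by positivity)
        have hs : Real.sqrt Real.pi < 2 := by
          rw [show (2:ℝ) = Real.sqrt 4 by rw [show (4:ℝ) = 2^2 by norm_num, Real.sqrt_sq (by norm_num : (0:ℝ) ≤ 2)]]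
          exact Real.sqrt_lt_sqrt Real.pi_pos.le (by linarith [Real.pi_lt_d2])
        linarith
      have hgy : g ((1:ℝ)/2) ≤ g (N/2) := by
        have h := log_le_slope (a := 0) (c := 1/2) (d := N/2)
          le_rfl (by linarith) (by norm_num) (by linarith)
        rw [zero_add, Real.log_one] at h
        have hpos : (0:ℝ) < N/2 - 1/2 := by linarith
        nlinarith [(le_div_iff₀ hpos).mp h]
      have hc2 : N * g ((1:ℝ)/2) ≤ 2 * g ((1:ℝ)/2) :=
        mul_le_mul_of_nonpos_right hN2 hneg.le
      linarith
    · -- m ≥ 2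
      have hM2 : (2:ℝ) ≤ M := by rw [hMdef]; exact_mod_cast hm2
      have hA : g (M/2) ≤ Real.log (M/2) * (M/2) := by
        have h := slope_le_log (a := 0) (b := M/2) (c := M/2 - 1)
          (by norm_num) (by linarith) (by linarith) (by linarith) (by linarith)
        rw [show M/2 - 1 + 1 = M/2 by ring, g_zero, sub_zero, sub_zero] at h
        exact (div_le_iff₀ (by linarith : (0:ℝ) < M/2)).mp h
      have hB : Real.log (M/2 + 1/2) * (K/2) ≤ g (N/2) - g (M/2) := by
        have h := log_le_slope (a := M/2 - 1/2) (c := M/2) (d := N/2)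
          (by linarith) (by linarith) (by linarith) (by linarith)
        rw [show M/2 - 1/2 + 1 = M/2 + 1/2 by ring, hKM] at h
        exact (le_div_iff₀ hK2).mp h
      have hlog : Real.log (M/2) < Real.log (M/2 + 1/2) :=
        Real.log_lt_log (by linarith) (by linarith)
      have e0 : N * g (M/2) = M * g (M/2) + K * g (M/2) := by rw [hNMK]; ring
      have e1 : M * (Real.log (M/2 + 1/2) * (K/2)) ≤ M * (g (N/2) - g (M/2)) :=
        mul_le_mul_of_nonneg_left hB hM0.le
      have e2 : K * g (M/2) ≤ K * (Real.log (M/2) * (M/2)) :=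
        mul_le_mul_of_nonneg_left hA hK0.le
      have e3 : (M*K/2) * Real.log (M/2) < (M*K/2) * Real.log (M/2 + 1/2) :=
        mul_lt_mul_of_pos_left hlog (by positivity)
      linarith [e0, e1, e2, e3]
  have hT2 : M * g (N/2) - N * g (M/2) < N * K / 2 := by
    have e0' : N * K = M * K + K * K := by rw [hNMK]; ring
    rcases Nat.lt_or_ge m 2 with hm2 | hm2
    · -- m = 1
      have hm1' : m = 1 := by omega
      have hMeq : M = 1 := by rw [hMdef, hm1']; norm_num
      rw [hMeq] at hC ⊢
      have hlow : -(1/2 : ℝ) < g (1/2) := by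
        rw [g_half]
        have hsp : (0:ℝ) < Real.sqrt Real.pi := Real.sqrt_pos.mpr Real.pi_pos
        have h1 : (4:ℝ)/3 < Real.sqrt Real.pi := by
          rw [show (4:ℝ)/3 = Real.sqrt ((4/3)^2) by
            rw [Real.sqrt_sq (by norm_num : (0:ℝ) ≤ 4/3)]]
          exact Real.sqrt_lt_sqrt (by norm_num) (by nlinarith [Real.pi_gt_three])
        have h2 := Real.log_le_sub_one_of_pos (show (0:ℝ) < 2/Real.sqrt Real.pi by positivity)
        have h3 : Real.log (2/Real.sqrt Real.pi) = - Real.log (Real.sqrt Real.pi / 2) := by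
          rw [show (2:ℝ)/Real.sqrt Real.pi = (Real.sqrt Real.pi/2)⁻¹ by rw [inv_div], Real.log_inv]
        have h4 : 2/Real.sqrt Real.pi - 1 < 1/2 := by
          rw [div_sub' hsp.ne', div_lt_iff₀ hsp]
          nlinarith [h1]
        linarith
      have hly : Real.log (N/2 + 1/2) ≤ K/2 := by
        have h := Real.log_le_sub_one_of_pos (show (0:ℝ) < N/2 + 1/2 by linarith)
        have e : N/2 + 1/2 - 1 = K/2 := by rw [hNMK, hMeq]; ring
        linarith
      have f1 : (K/2) * Real.log (N/2 + 1/2) ≤ (K/2) * (K/2) :=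
        mul_le_mul_of_nonneg_left hly (by positivity)
      have f2 : K * (-(g (1/2))) < K * (1/2) :=
        mul_lt_mul_of_pos_left (by linarith) hK0
      have hKK : (1:ℝ) ≤ K * K := by nlinarith [hK1]
      have e0 : N * g (1/2) = g (1/2) + K * g (1/2) := by rw [hNMK, hMeq]; ring
      have e0'' : N * K = K + K * K := by rw [hNMK, hMeq]; ring
      linarith [hC, f1, f2, e0, e0'', hKK]
    · -- m ≥ 2
      have hM2 : (2:ℝ) ≤ M := by rw [hMdef]; exact_mod_cast hm2
      have hm2' : 2 ≤ m := hm2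
      have hD : (M/2) * Real.log (M/2) - M/2 + 1 ≤ g (M/2) := g_ge m hm2'
      have hL : Real.log (N/2 + 1/2) - Real.log (M/2) ≤ (K+1)/M := by
        have harg : (0:ℝ) < (N/2 + 1/2)/(M/2) := by positivity
        have l := Real.log_le_sub_one_of_pos harg
        have ldiv : Real.log ((N/2 + 1/2)/(M/2)) =
            Real.log (N/2 + 1/2) - Real.log (M/2) :=
          Real.log_div (by linarith) (by linarith)
        have harith : (N/2 + 1/2)/(M/2) - 1 = (K+1)/M := by
          rw [hNMK]; field_simp; ring
        rw [ldiv, harith] at l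
        exact l
      have f1 : M * (g (N/2) - g (M/2)) ≤ M * (Real.log (N/2 + 1/2) * (K/2)) :=
        mul_le_mul_of_nonneg_left hC hM0.le
      have f2 : K * ((M/2) * Real.log (M/2) - M/2 + 1) ≤ K * g (M/2) :=
        mul_le_mul_of_nonneg_left hD hK0.le
      have f3 : (M*K/2) * (Real.log (N/2 + 1/2) - Real.log (M/2)) ≤ (M*K/2) * ((K+1)/M) :=
        mul_le_mul_of_nonneg_left hL (by positivity)
      have f4 : (M*K/2) * ((K+1)/M) = K*(K+1)/2 := by field_simp
      have e0 : N * g (M/2) = M * g (M/2) + K * g (M/2) := by rw [hNMK]; ring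
      linarith [f1, f2, f3, f4, e0, e0', hK1]
  have hrw : g (M/2) - M/N * g (N/2) = (N * g (M/2) - M * g (N/2))/N := by
    field_simp
  constructor
  · rw [Real.exp_lt_exp, hrw, lt_div_iff₀ hN0]
    linarith [hT2]
  · rw [show (1:ℝ) = Real.exp 0 by rw [Real.exp_zero], Real.exp_lt_exp, hrw]
    exact div_neg_of_neg_of_pos (by linarith [hT1]) hN0
end
end
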